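/- Let $U$ be a complete filtered cocommutative bialgebra over a field of characteristic zero, $\beta = \sum_{i\ge1} b_i$ a primitive element with $b_i$ of weight $i$, and suppose $U$ carries a dendriform splitting of its product on the positively-weighted part given by $u \prec v = \frac{|u|}{|u|+|v|} uv$ on weight-homogeneous elements (Foissy's construction). Then the element $1 + \sum_{k\ge1}\beta^{\prec k}$ is group-like: $\Delta\left(1+\sum_{k\ge1}\beta^{\prec k}\right) = \left(1+\sum_{k\ge1}\beta^{\prec k}\right)\otimes\left(1+\sum_{k\ge1}\beta^{\prec k}\right)$. Equivalently, writing $\beta^{\prec m} = \sum_i b_i^{(m)}$ with $b_i^{(m)}$ of weight $i$ and $b_i^{(0)} = \delta_{i,0}$, one has $\Delta(b_i^{(k)}) = \sum_{p=0}^{k}\sum_{r=0}^{i} b_r^{(p)} \otimes b_{i-r}^{(k-p)}$. -/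

import Mathlib

open TensorProduct

/-- `Bcomp b k i` is the weight-`i` component `b_i^{(k)}` of the `k`-th Foissy
left-power `β^{≺k}` of the primitive series `β = ∑_{i≥1} b i`, defined by
`b_i^{(0)} = δ_{i,0}` and `b_s^{(m+1)} = ∑_i (i/s) b_i b_{s-i}^{(m)}`. -/
noncomputable def Bcomp {U : Type*} [Ring U] [Module ℚ U] (b : ℕ → U) :
    ℕ → ℕ → U
  | 0, i => if i = 0 then 1 else 0
  | m + 1, s => ∑ i ∈ Finset.range (s + 1),
      (((i : ℚ) / (s : ℚ)) • (b i * Bcomp b m (s - i)))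

open Finset in
private lemma foissy_tri {M : Type*} [AddCommMonoid M] (n : ℕ) (f : ℕ → ℕ → M) :
    ∑ i ∈ range (n + 1), ∑ j ∈ range (n - i + 1), f i j
      = ∑ t ∈ range (n + 1), ∑ i ∈ range (t + 1), f i (t - i) := by
  rw [Finset.sum_sigma', Finset.sum_sigma']
  refine Finset.sum_nbij' (fun x => ⟨x.1 + x.2, x.1⟩) (fun y => ⟨y.2, y.1 - y.2⟩) ?_ ?_ ?_ ?_ ?_ <;>
    rintro ⟨a, c⟩ h <;> simp only [Finset.mem_sigma, Finset.mem_range] at h ⊢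
  · omega
  · omega
  · have : a + c - a = c := by omega
    simp [this]
  · have : c + (a - c) = a := by omega
    simp [this]
  · congr 1; omega

open Finset in
private lemma foissy_tri2 {M : Type*} [AddCommMonoid M] (n : ℕ) (f : ℕ → ℕ → M) :
    ∑ i ∈ range (n + 1), ∑ j ∈ range (n - i + 1), f i j
      = ∑ j ∈ range (n + 1), ∑ i ∈ range (n - j + 1), f i j := by
  rw [Finset.sum_sigma', Finset.sum_sigma']
  refine Finset.sum_nbij' (fun x => ⟨x.2, x.1⟩) (fun y => ⟨y.2, y.1⟩) ?_ ?_ ?_ ?_ ?_ <;>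
    rintro ⟨a, c⟩ h <;> simp only [Finset.mem_sigma, Finset.mem_range] at h ⊢ <;> omega

private lemma foissy_coef (s t i : ℕ) (hs : s ≠ 0) (hit : i ≤ t) :
    ((t:ℚ)/(s:ℚ)) * ((i:ℚ)/(t:ℚ)) = (i:ℚ)/(s:ℚ) := by
  rcases Nat.eq_zero_or_pos t with h | h
  · subst h
    interval_cases i
    simp
  · have ht : (t:ℚ) ≠ 0 := Nat.cast_ne_zero.mpr (by omega)
    have hs' : (s:ℚ) ≠ 0 := Nat.cast_ne_zero.mpr hs
    field_simp

/-- in a complete filtered cocommutative bialgebra over `ℚ` with a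
primitive series `β = ∑_{i≥1} b i` and the Foissy dendriform splitting
`u ≺ v = |u|/(|u|+|v|)·uv`, the element `1 + ∑_k β^{≺k}` is group-like;
componentwise: `Δ(b_i^{(k)}) = ∑_{p=0}^{k} ∑_{r=0}^{i} b_r^{(p)} ⊗ b_{i-r}^{(k-p)}`. -/
theorem foissy_power_grouplike
    {U : Type*} [Ring U] [Bialgebra ℚ U]
    (hcocomm : ∀ x : U,
      (TensorProduct.comm ℚ U U) (Coalgebra.comul (R := ℚ) x)
        = Coalgebra.comul (R := ℚ) x)
    (b : ℕ → U) (hb0 : b 0 = 0)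
    (hprim : ∀ i : ℕ, 1 ≤ i →
      Coalgebra.comul (R := ℚ) (b i) = b i ⊗ₜ[ℚ] 1 + 1 ⊗ₜ[ℚ] b i) :
    ∀ k i : ℕ,
      Coalgebra.comul (R := ℚ) (Bcomp b k i)
        = ∑ p ∈ Finset.range (k + 1), ∑ r ∈ Finset.range (i + 1),
            Bcomp b p r ⊗ₜ[ℚ] Bcomp b (k - p) (i - r) := by
  classical
  have hprim' : ∀ i : ℕ,
      Coalgebra.comul (R := ℚ) (b i) = b i ⊗ₜ[ℚ] 1 + 1 ⊗ₜ[ℚ] b i := by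
    intro i
    cases i with
    | zero => simp [hb0]
    | succ n => exact hprim _ (Nat.succ_le_succ (Nat.zero_le n))
  intro k
  induction k with
  | zero =>
    intro i
    cases i with
    | zero => simp [Bcomp, Algebra.TensorProduct.one_def]
    | succ n =>
      rw [show Bcomp b 0 (n+1) = 0 by simp [Bcomp], map_zero, Finset.sum_range_one]
      symm
      apply Finset.sum_eq_zero
      intro r hr
      rcases Nat.eq_zero_or_pos r with h | h
      · subst h
        rw [show Bcomp b 0 (n+1-0) = 0 by simp [Bcomp], tmul_zero]
      · rw [show Bcomp b 0 r = 0 by simp [Bcomp]; omega, zero_tmul]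
  | succ k ih =>
    intro s
    rcases Nat.eq_zero_or_pos s with hs | hs
    · subst hs
      rw [show Bcomp b (k+1) 0 = 0 by simp [Bcomp], map_zero]
      symm
      apply Finset.sum_eq_zero
      intro p hp
      rw [Finset.sum_range_one]
      cases p with
      | zero =>
        rw [show Bcomp b (k+1-0) (0-0) = 0 by simp [Bcomp], tmul_zero]
      | succ q =>
        rw [show Bcomp b (q+1) 0 = 0 by simp [Bcomp], zero_tmul]
    · -- main case: s ≥ 1
      open Finset in
      have hsQ : (s:ℚ) ≠ 0 := Nat.cast_ne_zero.mpr (by omega)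
      have hL : Coalgebra.comul (R := ℚ) (Bcomp b (k+1) s)
          = (∑ i ∈ range (s+1), ∑ p ∈ range (k+1), ∑ r ∈ range (s-i+1),
              ((i:ℚ)/(s:ℚ)) • ((b i * Bcomp b p r) ⊗ₜ[ℚ] Bcomp b (k-p) (s-i-r)))
          + (∑ i ∈ range (s+1), ∑ p ∈ range (k+1), ∑ r ∈ range (s-i+1),
              ((i:ℚ)/(s:ℚ)) • (Bcomp b p r ⊗ₜ[ℚ] (b i * Bcomp b (k-p) (s-i-r)))) := by
        rw [show Bcomp b (k+1) s = ∑ i ∈ Finset.range (s + 1),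
            (((i : ℚ) / (s : ℚ)) • (b i * Bcomp b k (s - i))) from rfl]
        rw [map_sum, ← Finset.sum_add_distrib]
        refine Finset.sum_congr rfl fun i hi => ?_
        rw [map_smul, Bialgebra.comul_mul, hprim' i, ih (s - i), add_mul]
        simp only [Finset.mul_sum, Algebra.TensorProduct.tmul_mul_tmul, one_mul, mul_one,
          Finset.smul_sum, smul_add, Finset.sum_add_distrib]
      rw [hL]
      -- put LHS pieces in normal form
      have hA : (∑ i ∈ range (s+1), ∑ p ∈ range (k+1), ∑ r ∈ range (s-i+1),
              ((i:ℚ)/(s:ℚ)) • ((b i * Bcomp b p r) ⊗ₜ[ℚ] Bcomp b (k-p) (s-i-r)))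
          = ∑ p ∈ range (k+1), ∑ t ∈ range (s+1), ∑ i ∈ range (t+1),
              ((i:ℚ)/(s:ℚ)) • ((b i * Bcomp b p (t-i)) ⊗ₜ[ℚ] Bcomp b (k-p) (s-t)) := by
        rw [Finset.sum_comm]
        refine Finset.sum_congr rfl fun p hp => ?_
        rw [foissy_tri s (fun i r =>
          ((i:ℚ)/(s:ℚ)) • ((b i * Bcomp b p r) ⊗ₜ[ℚ] Bcomp b (k-p) (s-i-r)))]
        refine Finset.sum_congr rfl fun t ht => Finset.sum_congr rfl fun i hi => ?_
        rw [Finset.mem_range] at ht hi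
        rw [show s - i - (t - i) = s - t by omega]
      have hB : (∑ i ∈ range (s+1), ∑ p ∈ range (k+1), ∑ r ∈ range (s-i+1),
              ((i:ℚ)/(s:ℚ)) • (Bcomp b p r ⊗ₜ[ℚ] (b i * Bcomp b (k-p) (s-i-r))))
          = ∑ p ∈ range (k+1), ∑ t ∈ range (s+1), ∑ i ∈ range (s-t+1),
              ((i:ℚ)/(s:ℚ)) • (Bcomp b p t ⊗ₜ[ℚ] (b i * Bcomp b (k-p) (s-t-i))) := by
        rw [Finset.sum_comm]
        refine Finset.sum_congr rfl fun p hp => ?_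
        rw [foissy_tri2 s (fun i r =>
          ((i:ℚ)/(s:ℚ)) • (Bcomp b p r ⊗ₜ[ℚ] (b i * Bcomp b (k-p) (s-i-r))))]
        refine Finset.sum_congr rfl fun t ht => Finset.sum_congr rfl fun i hi => ?_
        rw [show s - i - t = s - t - i by omega]
      rw [hA, hB]
      -- now RHS equals the same normal form
      symm
      have split : ∀ p ∈ Finset.range (k + 1 + 1), ∀ t ∈ Finset.range (s + 1),
          Bcomp b p t ⊗ₜ[ℚ] Bcomp b (k + 1 - p) (s - t)
            = ((t:ℚ)/(s:ℚ)) • (Bcomp b p t ⊗ₜ[ℚ] Bcomp b (k + 1 - p) (s - t))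
              + (((s-t:ℕ):ℚ)/(s:ℚ)) • (Bcomp b p t ⊗ₜ[ℚ] Bcomp b (k + 1 - p) (s - t)) := by
        intro p _ t ht
        rw [Finset.mem_range] at ht
        rw [← add_smul]
        have : ((t:ℚ)/(s:ℚ)) + (((s-t:ℕ):ℚ)/(s:ℚ)) = 1 := by
          rw [Nat.cast_sub (by omega)]
          field_simp
          ring
        rw [this, one_smul]
      calc ∑ p ∈ Finset.range (k + 1 + 1), ∑ t ∈ Finset.range (s + 1),
            Bcomp b p t ⊗ₜ[ℚ] Bcomp b (k + 1 - p) (s - t)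
          = (∑ p ∈ Finset.range (k + 1 + 1), ∑ t ∈ Finset.range (s + 1),
              ((t:ℚ)/(s:ℚ)) • (Bcomp b p t ⊗ₜ[ℚ] Bcomp b (k + 1 - p) (s - t)))
            + (∑ p ∈ Finset.range (k + 1 + 1), ∑ t ∈ Finset.range (s + 1),
              (((s-t:ℕ):ℚ)/(s:ℚ)) • (Bcomp b p t ⊗ₜ[ℚ] Bcomp b (k + 1 - p) (s - t))) := by
            rw [← Finset.sum_add_distrib]
            refine Finset.sum_congr rfl fun p hp => ?_
            rw [← Finset.sum_add_distrib]
            exact Finset.sum_congr rfl fun t ht => split p hp t ht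
        _ = _ := by
            congr 1
            · rw [Finset.sum_range_succ']
              have h0 : (∑ t ∈ Finset.range (s + 1),
                  ((t:ℚ)/(s:ℚ)) • (Bcomp b 0 t ⊗ₜ[ℚ] Bcomp b (k + 1 - 0) (s - t))) = 0 := by
                apply Finset.sum_eq_zero
                intro t _
                rcases Nat.eq_zero_or_pos t with h | h
                · subst h; simp
                · rw [show Bcomp b 0 t = 0 by simp [Bcomp]; omega, zero_tmul, smul_zero]
              rw [h0, add_zero]
              refine Finset.sum_congr rfl fun p hp => Finset.sum_congr rfl fun t ht => ?_
              rw [Finset.mem_range] at hp ht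
              rw [show k + 1 - (p + 1) = k - p by omega]
              rw [show Bcomp b (p+1) t = ∑ i ∈ Finset.range (t + 1),
                (((i : ℚ) / (t : ℚ)) • (b i * Bcomp b p (t - i))) from rfl]
              rw [sum_tmul, Finset.smul_sum]
              refine Finset.sum_congr rfl fun i hi => ?_
              rw [Finset.mem_range] at hi
              rw [smul_tmul', smul_smul, foissy_coef s t i (by omega) (by omega), smul_tmul']
            · rw [Finset.sum_range_succ]
              have h0 : (∑ t ∈ Finset.range (s + 1),
                  (((s-t:ℕ):ℚ)/(s:ℚ)) • (Bcomp b (k+1) t ⊗ₜ[ℚ] Bcomp b (k + 1 - (k+1)) (s - t))) = 0 := by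
                apply Finset.sum_eq_zero
                intro t ht
                rw [Finset.mem_range] at ht
                rcases Nat.lt_or_ge t s with h | h
                · rw [show Bcomp b (k+1-(k+1)) (s - t) = 0 by simp [Bcomp]; omega, tmul_zero, smul_zero]
                · rw [show s - t = 0 by omega]
                  simp
              rw [h0, add_zero]
              refine Finset.sum_congr rfl fun p hp => Finset.sum_congr rfl fun t ht => ?_
              rw [Finset.mem_range] at hp ht
              rw [show k + 1 - p = (k - p) + 1 by omega]
              rw [show Bcomp b ((k-p)+1) (s-t) = ∑ i ∈ Finset.range ((s-t) + 1),
                (((i : ℚ) / ((s-t:ℕ) : ℚ)) • (b i * Bcomp b (k-p) ((s-t) - i))) from rfl]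
              rw [tmul_sum, Finset.smul_sum]
              refine Finset.sum_congr rfl fun i hi => ?_
              rw [Finset.mem_range] at hi
              rw [tmul_smul, smul_smul, foissy_coef s (s-t) i (by omega) (by omega)]
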